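/- Fix n, m ≥ 1 and let A = ℚ[ℏ][x_{i,j}, y_{i,j} : 1 ≤ i ≤ n, 1 ≤ j ≤ m] be the polynomial ring over ℚ[ℏ]. For a multi-index I : Fin n × Fin m → ℕ write ∂_x^I = ∏_{i,j} (∂/∂x_{i,j})^{I(i,j)}, similarly ∂_y^I, I! = ∏_{i,j} I(i,j)!, and |I| = Σ_{i,j} I(i,j); define the star product f ⋆ g = Σ_I (ℏ^{|I|}/I!) (∂_y^I f)(∂_x^I g) (a finite sum). Let S_n act on A by σ•x_{i,j} = x_{σ(i),j}, σ•y_{i,j} = y_{σ(i),j}, and let s(f) = (1/n!) Σ_{σ∈S_n} σ•f. For exponent matrices a, b, c, d : Fin n × Fin m → ℕ write x^a y^b = ∏_{i,j} x_{i,j}^{a(i,j)} y_{i,j}^{b(i,j)} and σ(c)(i,j) = c(σ⁻¹(i),j). Then s(x^a y^b) ⋆ s(x^c y^d) = (1/n!) Σ_{σ∈S_n} Σ_{I} ( ∏_{i,j} C(b(i,j), I(i,j)) · (σ(c)(i,j))_{I(i,j)} ) · ℏ^{|I|} · s( x^{a+σ(c)−I} y^{b+σ(d)−I} ), where the inner sum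 runs over all multi-indices I with I ≤ b and I ≤ σ(c) componentwise, C is the binomial coefficient, and (x)_r is the falling factorial. -/

import Mathlib

open Finset MvPolynomial

/-- Variable index set: `((i,j), false)` is `x_{i,j}` and `((i,j), true)` is `y_{i,j}`. -/
abbrev Var13 (n m : ℕ) := (Fin n × Fin m) × Bool

/-- The algebra `A = ℚ[ℏ][x_{i,j}, y_{i,j}]`, with `ℏ = Polynomial.X` in the base ring. -/
abbrev Alg13 (n m : ℕ) := MvPolynomial (Var13 n m) (Polynomial ℚ)

/-- The iterated partial derivative `∂^I` with respect to the `x`-variables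
(if `isY = false`) or the `y`-variables (if `isY = true`):
`∂^I = ∏_{i,j} (∂/∂x_{i,j})^{I(i,j)}` (the factors commute, taken in a fixed order). -/
noncomputable def derMulti (n m : ℕ) (isY : Bool) (I : Fin n × Fin m → ℕ) :
    Module.End (Polynomial ℚ) (Alg13 n m) :=
  ((Finset.univ : Finset (Fin n × Fin m)).toList).foldr
    (fun p F => ((pderiv ((p, isY) : Var13 n m)).toLinearMap ^ I p) * F) 1

/-- The star product `f ⋆ g = Σ_I (ℏ^{|I|}/I!) (∂_y^I f)(∂_x^I g)`.  The sum over all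
multi-indices `I` is finite: all terms with some `I(i,j) > totalDegree f` vanish, so it is
realized as a sum over `I : Fin n × Fin m → Fin (totalDegree f + 1)`. -/
noncomputable def star13 (n m : ℕ) (f g : Alg13 n m) : Alg13 n m :=
  ∑ I : Fin n × Fin m → Fin (f.totalDegree + 1),
    (Polynomial.C (((∏ p : Fin n × Fin m, Nat.factorial (I p) : ℕ) : ℚ))⁻¹ *
        Polynomial.X ^ (∑ p : Fin n × Fin m, (I p : ℕ))) •
      (derMulti n m true (fun p => I p) f * derMulti n m false (fun p => I p) g)

/-- The symmetrization `s(f) = (1/n!) Σ_{σ ∈ S_n} σ • f`, where `S_n` acts by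
`σ • x_{i,j} = x_{σ(i),j}` and `σ • y_{i,j} = y_{σ(i),j}`. -/
noncomputable def sym13 (n m : ℕ) (f : Alg13 n m) : Alg13 n m :=
  Polynomial.C ((n.factorial : ℚ))⁻¹ •
    ∑ σ : Equiv.Perm (Fin n),
      rename (fun v : Var13 n m => ((σ v.1.1, v.1.2), v.2)) f

/-- The monomial `x^a y^b = ∏_{i,j} x_{i,j}^{a(i,j)} y_{i,j}^{b(i,j)}`. -/
noncomputable def xy13 (n m : ℕ) (a b : Fin n × Fin m → ℕ) : Alg13 n m :=
  ∏ p : Fin n × Fin m, (X ((p, false) : Var13 n m) ^ a p * X ((p, true) : Var13 n m) ^ b p)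

namespace Aux13
variable {n m : ℕ}

/-- The exponent of the monomial `x^a y^b`. -/
noncomputable def E (a b : Fin n × Fin m → ℕ) : Var13 n m →₀ ℕ :=
  Finsupp.equivFunOnFinite.symm (fun v => if v.2 then b v.1 else a v.1)

@[simp] lemma E_apply (a b : Fin n × Fin m → ℕ) (v : Var13 n m) :
    E a b v = if v.2 then b v.1 else a v.1 := rfl

/-- Permutation action on exponent matrices. -/
def pact (σ : Equiv.Perm (Fin n)) (u : Fin n × Fin m → ℕ) : Fin n × Fin m → ℕ :=
  fun p => u (σ⁻¹ p.1, p.2)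

@[simp] lemma pact_one (u : Fin n × Fin m → ℕ) : pact (1 : Equiv.Perm (Fin n)) u = u := by
  funext p; simp [pact]

lemma prod_monomial_one {α : Type*} (s : Finset α) (e : α → (Var13 n m →₀ ℕ)) :
    ∏ p ∈ s, (monomial (e p) (1 : Polynomial ℚ)) = monomial (∑ p ∈ s, e p) 1 := by
  classical
  induction s using Finset.induction with
  | empty => simp
  | insert _ _ h ih => rw [Finset.prod_insert h, Finset.sum_insert h, ih, monomial_mul, one_mul]

lemma xy13_eq (a b : Fin n × Fin m → ℕ) : xy13 n m a b = monomial (E a b) 1 := by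
  rw [xy13]
  have h : ∀ p : Fin n × Fin m,
      (X ((p, false) : Var13 n m) ^ a p * X ((p, true) : Var13 n m) ^ b p : Alg13 n m)
        = monomial (Finsupp.single ((p, false) : Var13 n m) (a p)
            + Finsupp.single ((p, true) : Var13 n m) (b p)) 1 := by
    intro p
    rw [X_pow_eq_monomial, X_pow_eq_monomial, monomial_mul, one_mul]
  rw [Finset.prod_congr rfl (fun p _ => h p), prod_monomial_one]
  have hE : (∑ p : Fin n × Fin m, (Finsupp.single ((p, false) : Var13 n m) (a p)
      + Finsupp.single ((p, true) : Var13 n m) (b p))) = E a b := by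
    ext v
    rw [Finsupp.finset_sum_apply]
    obtain ⟨p, s⟩ := v
    cases s <;> simp [Finsupp.single_apply]
  rw [hE]

lemma pderiv_pow_monomial (v : Var13 n m) (k : ℕ) (e : Var13 n m →₀ ℕ) (r : Polynomial ℚ) :
    (((pderiv v).toLinearMap : Module.End (Polynomial ℚ) (Alg13 n m)) ^ k) (monomial e r)
      = monomial (e - Finsupp.single v k) (((e v).descFactorial k : ℕ) * r) := by
  induction k with
  | zero => simp
  | succ k ih =>
    rw [pow_succ', Module.End.mul_apply, ih]
    simp only [Derivation.coeFn_coe, pderiv_monomial]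
    have h1 : (e - Finsupp.single v k) v = e v - k := by
      rw [Finsupp.tsub_apply, Finsupp.single_eq_same]
    have h2 : e - Finsupp.single v k - Finsupp.single v 1 = e - Finsupp.single v (k + 1) := by
      rw [tsub_tsub, ← Finsupp.single_add]
    rw [h1, h2, Nat.descFactorial_succ]
    congr 1
    push_cast
    ring

lemma foldr_der (isY : Bool) (I : Fin n × Fin m → ℕ) (l : List (Fin n × Fin m))
    (hl : l.Nodup) (e : Var13 n m →₀ ℕ) (r : Polynomial ℚ) :
    (l.foldr (fun p F => ((pderiv ((p, isY) : Var13 n m)).toLinearMap ^ I p) * F)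
        (1 : Module.End (Polynomial ℚ) (Alg13 n m))) (monomial e r)
      = monomial (e - (l.map fun p => Finsupp.single ((p, isY) : Var13 n m) (I p)).sum)
          (((l.map fun p => ((e ((p, isY) : Var13 n m))).descFactorial (I p)).prod : ℕ) * r) := by
  induction l with
  | nil => simp
  | cons p l ih =>
    have hp : p ∉ l := (List.nodup_cons.1 hl).1
    rw [List.foldr_cons, Module.End.mul_apply, ih (List.nodup_cons.1 hl).2,
      pderiv_pow_monomial]
    have hz : ∀ l' : List (Fin n × Fin m), p ∉ l' →
        ((l'.map fun q => Finsupp.single ((q, isY) : Var13 n m) (I q)).sum)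
          ((p, isY) : Var13 n m) = 0 := by
      intro l'
      induction l' with
      | nil => simp
      | cons q t iht =>
        intro h
        have hqp : q ≠ p := fun hh => h (hh ▸ List.mem_cons_self)
        rw [List.map_cons, List.sum_cons, Finsupp.add_apply,
          iht (fun hh => h (List.mem_cons_of_mem _ hh))]
        simp [Finsupp.single_apply, hqp]
    have h1 : (e - (l.map fun q => Finsupp.single ((q, isY) : Var13 n m) (I q)).sum)
        ((p, isY) : Var13 n m) = e ((p, isY) : Var13 n m) := by
      rw [Finsupp.tsub_apply, hz l hp, Nat.sub_zero]
    rw [h1]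
    rw [tsub_tsub]
    congr 1
    · congr 1
      rw [List.map_cons, List.sum_cons, add_comm]
    · rw [List.map_cons, List.prod_cons]
      push_cast
      ring

lemma derMulti_monomial (isY : Bool) (I : Fin n × Fin m → ℕ) (e : Var13 n m →₀ ℕ)
    (r : Polynomial ℚ) :
    derMulti n m isY I (monomial e r)
      = monomial (e - ∑ p : Fin n × Fin m, Finsupp.single ((p, isY) : Var13 n m) (I p))
          ((∏ p : Fin n × Fin m, ((e ((p, isY) : Var13 n m))).descFactorial (I p) : ℕ) * r) := by
  rw [derMulti, foldr_der isY I _ (Finset.nodup_toList _), Finset.sum_map_toList,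
    Finset.prod_map_toList]

/-- `∑_p single (p,isY) (I p)` evaluated. -/
noncomputable def SS (isY : Bool) (I : Fin n × Fin m → ℕ) : Var13 n m →₀ ℕ :=
  ∑ p : Fin n × Fin m, Finsupp.single ((p, isY) : Var13 n m) (I p)

lemma SS_apply (isY : Bool) (I : Fin n × Fin m → ℕ) (v : Var13 n m) :
    SS isY I v = if v.2 = isY then I v.1 else 0 := by
  rw [SS, Finsupp.finset_sum_apply]
  obtain ⟨p, s⟩ := v
  cases s <;> cases isY <;> simp [Finsupp.single_apply]

lemma rename_mono (σ : Equiv.Perm (Fin n)) (a b : Fin n × Fin m → ℕ) (r : Polynomial ℚ) :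
    rename (fun v : Var13 n m => ((σ v.1.1, v.1.2), v.2)) (monomial (E a b) r)
      = monomial (E (pact σ a) (pact σ b)) r := by
  have hfun : (fun v : Var13 n m => ((σ v.1.1, v.1.2), v.2))
      = ⇑((Equiv.prodCongr (Equiv.prodCongr σ (Equiv.refl (Fin m))) (Equiv.refl Bool))) := rfl
  have hE : Finsupp.mapDomain (fun v : Var13 n m => ((σ v.1.1, v.1.2), v.2)) (E a b)
      = E (pact σ a) (pact σ b) := by
    rw [hfun]
    ext v
    rw [Finsupp.mapDomain_equiv_apply]
    obtain ⟨⟨i, j⟩, s⟩ := v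
    cases s <;> simp [pact, Equiv.prodCongr, Equiv.Perm.inv_def]
  rw [rename_monomial, hE]

lemma sym13_xy13 (a b : Fin n × Fin m → ℕ) :
    sym13 n m (xy13 n m a b)
      = Polynomial.C ((n.factorial : ℚ))⁻¹ •
          ∑ σ : Equiv.Perm (Fin n), (monomial (E (pact σ a) (pact σ b)) (1 : Polynomial ℚ)) := by
  rw [sym13, xy13_eq]
  congr 1
  exact Finset.sum_congr rfl fun σ _ => rename_mono σ a b 1

lemma prod_pact {M : Type*} [CommMonoid M] (σ : Equiv.Perm (Fin n)) (F : Fin n × Fin m → M) :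
    ∏ q : Fin n × Fin m, F (σ⁻¹ q.1, q.2) = ∏ q : Fin n × Fin m, F q :=
  Fintype.prod_equiv (Equiv.prodCongr (σ⁻¹ : Equiv.Perm (Fin n)) (Equiv.refl (Fin m))) _ _
    (fun q => by rfl)

lemma sum_pact (σ : Equiv.Perm (Fin n)) (F : Fin n × Fin m → ℕ) :
    ∑ q : Fin n × Fin m, F (σ⁻¹ q.1, q.2) = ∑ q : Fin n × Fin m, F q :=
  Fintype.sum_equiv (Equiv.prodCongr (σ⁻¹ : Equiv.Perm (Fin n)) (Equiv.refl (Fin m))) _ _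
    (fun q => by rfl)

lemma E_degree (a b : Fin n × Fin m → ℕ) :
    (E a b).degree = ∑ p : Fin n × Fin m, (a p + b p) := by
  rw [Finsupp.degree_apply, Finset.sum_subset (Finset.subset_univ _)
    (fun v _ hv => Finsupp.notMem_support_iff.1 hv), Fintype.sum_prod_type]
  refine Finset.sum_congr rfl fun p _ => ?_
  simp [Fintype.sum_bool, Nat.add_comm]

lemma sym13_xy13_totalDegree (a b : Fin n × Fin m → ℕ) :
    (sym13 n m (xy13 n m a b)).totalDegree = ∑ p : Fin n × Fin m, (a p + b p) := by
  have hhom : (sym13 n m (xy13 n m a b)).IsHomogeneous (∑ p : Fin n × Fin m, (a p + b p)) := by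
    rw [sym13_xy13, ← mem_homogeneousSubmodule]
    apply Submodule.smul_mem
    apply Submodule.sum_mem
    intro σ _
    rw [mem_homogeneousSubmodule]
    apply isHomogeneous_monomial
    rw [E_degree]
    exact sum_pact σ (fun q => a q + b q)
  have hne : sym13 n m (xy13 n m a b) ≠ 0 := by
    intro h0
    have hc : coeff (E a b) (sym13 n m (xy13 n m a b)) = 0 := by rw [h0]; simp
    rw [sym13_xy13, coeff_smul, coeff_sum] at hc
    simp only [coeff_monomial] at hc
    rw [Finset.sum_boole, smul_eq_mul, mul_eq_zero] at hc
    rcases hc with hc | hc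
    · exact (Polynomial.C_ne_zero.2 (inv_ne_zero (Nat.cast_ne_zero.2 n.factorial_ne_zero))) hc
    · have h1 : (1 : Equiv.Perm (Fin n)) ∈ Finset.univ.filter
          (fun σ : Equiv.Perm (Fin n) => E (pact σ a) (pact σ b) = E a b) := by
        simp
      rw [Nat.cast_eq_zero, Finset.card_eq_zero] at hc
      rw [hc] at h1
      exact absurd h1 (Finset.notMem_empty _)
  exact hhom.totalDegree hne

@[simp] lemma E_true (u v : Fin n × Fin m → ℕ) (p : Fin n × Fin m) :
    E u v ((p, true) : Var13 n m) = v p := rfl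

@[simp] lemma E_false (u v : Fin n × Fin m → ℕ) (p : Fin n × Fin m) :
    E u v ((p, false) : Var13 n m) = u p := rfl

lemma prod_pact' {M : Type*} [CommMonoid M] (σ : Equiv.Perm (Fin n)) (F : Fin n × Fin m → M) :
    ∏ q : Fin n × Fin m, F (σ q.1, q.2) = ∏ q : Fin n × Fin m, F q :=
  Fintype.prod_equiv (Equiv.prodCongr (σ : Equiv.Perm (Fin n)) (Equiv.refl (Fin m))) _ _
    (fun q => by rfl)

lemma sum_pact' (σ : Equiv.Perm (Fin n)) (F : Fin n × Fin m → ℕ) :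
    ∑ q : Fin n × Fin m, F (σ q.1, q.2) = ∑ q : Fin n × Fin m, F q :=
  Fintype.sum_equiv (Equiv.prodCongr (σ : Equiv.Perm (Fin n)) (Equiv.refl (Fin m))) _ _
    (fun q => by rfl)

/-- Generic term in the expansion of the left-hand side. -/
noncomputable def TL (a b c d : Fin n × Fin m → ℕ) (σ τ : Equiv.Perm (Fin n))
    (I : Fin n × Fin m → ℕ) : Alg13 n m :=
  (Polynomial.C (((∏ p : Fin n × Fin m, Nat.factorial (I p) : ℕ) : ℚ))⁻¹ *
      Polynomial.X ^ (∑ p : Fin n × Fin m, I p)) •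
    (monomial (E (pact σ a) (pact σ b) - SS true I)
        (((∏ p : Fin n × Fin m,
            ((E (pact σ a) (pact σ b)) ((p, true) : Var13 n m)).descFactorial (I p) : ℕ) :
          Polynomial ℚ) * 1) *
     monomial (E (pact τ c) (pact τ d) - SS false I)
        (((∏ p : Fin n × Fin m,
            ((E (pact τ c) (pact τ d)) ((p, false) : Var13 n m)).descFactorial (I p) : ℕ) :
          Polynomial ℚ) * 1))

/-- Generic term in the expansion of the right-hand side. -/
noncomputable def TR (a b c d : Fin n × Fin m → ℕ) (σ' τ' : Equiv.Perm (Fin n))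
    (I' : Fin n × Fin m → ℕ) : Alg13 n m :=
  (((∏ p : Fin n × Fin m,
        (b p).choose (I' p) * (c (σ'⁻¹ p.1, p.2)).descFactorial (I' p) : ℕ) : Polynomial ℚ) *
      Polynomial.X ^ (∑ p : Fin n × Fin m, I' p)) •
    monomial (E (pact τ' (fun p => a p + c (σ'⁻¹ p.1, p.2) - I' p))
        (pact τ' (fun p => b p + d (σ'⁻¹ p.1, p.2) - I' p))) 1

lemma TL_eq_zero (a b c d : Fin n × Fin m → ℕ) (σ τ : Equiv.Perm (Fin n))
    (I : Fin n × Fin m → ℕ)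
    (h : ¬ ∀ p : Fin n × Fin m, I p ≤ pact σ b p ∧ I p ≤ pact τ c p) :
    TL a b c d σ τ I = 0 := by
  push_neg at h
  obtain ⟨p, hp⟩ := h
  rw [TL]
  rcases Nat.lt_or_ge (pact σ b p) (I p) with h1 | h1
  · have hz : (∏ p : Fin n × Fin m,
        ((E (pact σ a) (pact σ b)) ((p, true) : Var13 n m)).descFactorial (I p)) = 0 :=
      Finset.prod_eq_zero (Finset.mem_univ p)
        (by simpa using Nat.descFactorial_eq_zero_iff_lt.2 h1)
    rw [hz]
    simp
  · have h2 := hp h1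
    have hz : (∏ p : Fin n × Fin m,
        ((E (pact τ c) (pact τ d)) ((p, false) : Var13 n m)).descFactorial (I p)) = 0 :=
      Finset.prod_eq_zero (Finset.mem_univ p)
        (by simpa using Nat.descFactorial_eq_zero_iff_lt.2 h2)
    rw [hz]
    simp

lemma core (a b c d : Fin n × Fin m → ℕ) (D : ℕ) (hbD : ∀ p : Fin n × Fin m, b p ≤ D)
    (σ τ : Equiv.Perm (Fin n)) :
    ∑ I : Fin n × Fin m → Fin (D + 1), TL a b c d σ τ (fun p => (I p : ℕ))
      = ∑ I' ∈ Finset.univ.filter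
          (fun I' : (p : Fin n × Fin m) → Fin (b p + 1) =>
            ∀ p : Fin n × Fin m, (I' p : ℕ) ≤ c ((σ⁻¹ * τ)⁻¹ p.1, p.2)),
        TR a b c d (σ⁻¹ * τ) σ (fun p => (I' p : ℕ)) := by
  classical
  have hc1 : ∀ p : Fin n × Fin m, c ((σ⁻¹ * τ)⁻¹ p.1, p.2) = pact τ c (σ p.1, p.2) := by
    intro p
    simp [pact, mul_inv_rev, Equiv.Perm.mul_apply]
  have hvan : ∀ I : Fin n × Fin m → Fin (D + 1), I ∈ Finset.univ →
      TL a b c d σ τ (fun p => (I p : ℕ)) ≠ 0 →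
      (∀ p : Fin n × Fin m, (I p : ℕ) ≤ pact σ b p ∧ (I p : ℕ) ≤ pact τ c p) := by
    intro I _ hne
    by_contra h
    exact hne (TL_eq_zero a b c d σ τ _ h)
  rw [← Finset.sum_filter_of_ne hvan]
  refine Finset.sum_nbij'
    (fun I p => (⟨min ((I (σ p.1, p.2) : ℕ)) (b p), Nat.lt_succ_of_le (min_le_right _ _)⟩ :
      Fin (b p + 1)))
    (fun I' q => (⟨min ((I' (σ⁻¹ q.1, q.2) : ℕ)) D, Nat.lt_succ_of_le (min_le_right _ _)⟩ :
      Fin (D + 1)))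
    ?_ ?_ ?_ ?_ ?_
  · -- membership forward
    intro I hI
    simp only [Finset.mem_filter, Finset.mem_univ, true_and] at hI ⊢
    intro p
    have h2 := (hI (σ p.1, p.2)).2
    rw [← hc1 p] at h2
    exact le_trans (min_le_left _ _) h2
  · -- membership backward
    intro I' hI'
    simp only [Finset.mem_filter, Finset.mem_univ, true_and] at hI' ⊢
    intro q
    have hle : (I' (σ⁻¹ q.1, q.2) : ℕ) ≤ b (σ⁻¹ q.1, q.2) := Nat.lt_succ_iff.1 (Fin.is_lt _)
    have h2 := hI' (σ⁻¹ q.1, q.2)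
    have hc : c ((σ⁻¹ * τ)⁻¹ (σ⁻¹ q.1, q.2).1, (σ⁻¹ q.1, q.2).2) = pact τ c q := by
      rw [hc1 (σ⁻¹ q.1, q.2)]
      simp [pact, (show ∀ x, σ (σ⁻¹ x) = x from fun x => Equiv.Perm.eq_inv_iff_eq.mp rfl)]
    rw [hc] at h2
    exact ⟨le_trans (min_le_left _ _) hle, le_trans (min_le_left _ _) h2⟩
  · -- left inverse
    intro I hI
    simp only [Finset.mem_filter, Finset.mem_univ, true_and] at hI
    funext q
    apply Fin.ext
    have h1 : (I q : ℕ) ≤ b (σ⁻¹ q.1, q.2) := (hI q).1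
    have hD : (I q : ℕ) ≤ D := Nat.lt_succ_iff.1 (Fin.is_lt _)
    simp only [(show ∀ x, σ (σ⁻¹ x) = x from fun x => Equiv.Perm.eq_inv_iff_eq.mp rfl), Prod.mk.eta, Fin.val_mk] <;> omega
  · -- right inverse
    intro I' hI'
    funext p
    apply Fin.ext
    have hle : (I' p : ℕ) ≤ b p := Nat.lt_succ_iff.1 (Fin.is_lt _)
    have hD : (I' p : ℕ) ≤ D := le_trans hle (hbD _)
    have hpp : ((σ⁻¹ (σ p.1) : Fin n), p.2) = p := by
      rw [(show ∀ x, σ⁻¹ (σ x) = x from fun x => Equiv.Perm.inv_eq_iff_eq.mpr rfl)]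
    dsimp only
    rw [hpp]
    omega
  · -- term equality
    intro I hI
    simp only [Finset.mem_filter, Finset.mem_univ, true_and] at hI
    have hval : ∀ p : Fin n × Fin m,
        min ((I (σ p.1, p.2) : ℕ)) (b p) = ((I (σ p.1, p.2)) : ℕ) := by
      intro p
      have h1 : (I (σ p.1, p.2) : ℕ) ≤ b (σ⁻¹ (σ p.1), p.2) := (hI (σ p.1, p.2)).1
      rw [(show ∀ x, σ⁻¹ (σ x) = x from fun x => Equiv.Perm.inv_eq_iff_eq.mpr rfl)] at h1
      simp only [Prod.mk.eta] at h1
      omega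
    rw [TL, TR]
    simp only [hval, E_true, E_false]
    have hsum : ∑ x : Fin n × Fin m, ((I (σ x.1, x.2)) : ℕ) = ∑ q : Fin n × Fin m, (I q : ℕ) :=
      sum_pact' σ (fun q => (I q : ℕ))
    have hprod : (∏ x : Fin n × Fin m,
          (b x).choose ((I (σ x.1, x.2)) : ℕ)
            * (c ((σ⁻¹ * τ)⁻¹ x.1, x.2)).descFactorial ((I (σ x.1, x.2)) : ℕ))
        = ∏ q : Fin n × Fin m,
            (pact σ b q).choose ((I q : ℕ)) * (pact τ c q).descFactorial ((I q : ℕ)) := by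
      rw [← prod_pact' σ (fun q =>
        (pact σ b q).choose ((I q : ℕ)) * (pact τ c q).descFactorial ((I q : ℕ)))]
      refine Finset.prod_congr rfl fun x _ => ?_
      rw [hc1 x]
      congr 2
      simp [pact]
    have hE2 : E (pact σ (fun p => a p + c ((σ⁻¹ * τ)⁻¹ p.1, p.2) - ((I (σ p.1, p.2)) : ℕ)))
          (pact σ (fun p => b p + d ((σ⁻¹ * τ)⁻¹ p.1, p.2) - ((I (σ p.1, p.2)) : ℕ)))
        = E (fun q => pact σ a q + pact τ c q - (I q : ℕ))
            (fun q => pact σ b q + pact τ d q - (I q : ℕ)) := by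
      ext v
      obtain ⟨q, s⟩ := v
      cases s <;>
        simp [pact, mul_inv_rev, Equiv.Perm.mul_apply, (show ∀ x, σ (σ⁻¹ x) = x from fun x => Equiv.Perm.eq_inv_iff_eq.mp rfl), Prod.mk.eta]
    have hexp : (E (pact σ a) (pact σ b) - SS true (fun p => (I p : ℕ)))
          + (E (pact τ c) (pact τ d) - SS false (fun p => (I p : ℕ)))
        = E (fun q => pact σ a q + pact τ c q - (I q : ℕ))
            (fun q => pact σ b q + pact τ d q - (I q : ℕ)) := by
      ext v
      rw [Finsupp.add_apply, Finsupp.tsub_apply, Finsupp.tsub_apply, SS_apply, SS_apply]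
      obtain ⟨q, s⟩ := v
      have h1 := (hI q).1
      have h2 := (hI q).2
      cases s <;> simp <;> omega
    rw [monomial_mul, hexp, hE2, hsum, hprod, smul_monomial, smul_monomial]
    congr 1
    have hdesc : ∏ q : Fin n × Fin m, (pact σ b q).descFactorial ((I q : ℕ))
        = (∏ q : Fin n × Fin m, ((I q : ℕ)).factorial)
          * ∏ q : Fin n × Fin m, (pact σ b q).choose ((I q : ℕ)) := by
      rw [← Finset.prod_mul_distrib]
      exact Finset.prod_congr rfl fun q _ => Nat.descFactorial_eq_factorial_mul_choose _ _
    rw [hdesc, Finset.prod_mul_distrib, smul_eq_mul, smul_eq_mul]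
    have hfact : (Polynomial.C (((∏ q : Fin n × Fin m, ((I q : ℕ)).factorial : ℕ) : ℚ))⁻¹)
        * ((∏ q : Fin n × Fin m, ((I q : ℕ)).factorial : ℕ) : Polynomial ℚ) = 1 := by
      rw [← Polynomial.C_eq_natCast, ← Polynomial.C_mul,
        inv_mul_cancel₀ (Nat.cast_ne_zero.2 (Finset.prod_ne_zero_iff.2
          (fun q _ => Nat.factorial_ne_zero _))), Polynomial.C_1]
    push_cast [] at hfact ⊢
    linear_combination (Polynomial.X ^ (∑ q : Fin n × Fin m, (I q : ℕ))
      * ((∏ q : Fin n × Fin m, (((pact σ b q).choose ((I q : ℕ)) : ℕ) : Polynomial ℚ))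
        * ∏ q : Fin n × Fin m, (((pact τ c q).descFactorial ((I q : ℕ)) : ℕ) : Polynomial ℚ)))
      * hfact

lemma lhs_expand (a b c d : Fin n × Fin m → ℕ) :
    star13 n m (sym13 n m (xy13 n m a b)) (sym13 n m (xy13 n m c d))
      = (Polynomial.C ((n.factorial : ℚ))⁻¹ * Polynomial.C ((n.factorial : ℚ))⁻¹) •
        ∑ σ : Equiv.Perm (Fin n), ∑ τ : Equiv.Perm (Fin n),
          ∑ I : Fin n × Fin m → Fin ((∑ p : Fin n × Fin m, (a p + b p)) + 1),
            TL a b c d σ τ (fun p => (I p : ℕ)) := by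
  unfold star13
  rw [sym13_xy13_totalDegree a b]
  rw [sym13_xy13 a b, sym13_xy13 c d]
  simp only [map_smul, map_sum, derMulti_monomial]
  simp only [smul_mul_smul_comm, Finset.sum_mul_sum, Finset.smul_sum, smul_smul, TL, SS]
  rw [Finset.sum_comm]
  refine Finset.sum_congr rfl fun σ _ => ?_
  rw [Finset.sum_comm]
  refine Finset.sum_congr rfl fun τ _ => Finset.sum_congr rfl fun I _ => ?_
  congr 1
  ring

lemma rhs_expand (a b c d : Fin n × Fin m → ℕ) :
    (Polynomial.C ((n.factorial : ℚ))⁻¹ •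
        ∑ σ : Equiv.Perm (Fin n),
          ∑ I ∈ Finset.univ.filter
              (fun I : (p : Fin n × Fin m) → Fin (b p + 1) =>
                ∀ p : Fin n × Fin m, (I p : ℕ) ≤ c (σ⁻¹ p.1, p.2)),
            (((∏ p : Fin n × Fin m,
                  (b p).choose (I p) * (c (σ⁻¹ p.1, p.2)).descFactorial (I p) : ℕ) :
                Polynomial ℚ) *
              Polynomial.X ^ (∑ p : Fin n × Fin m, (I p : ℕ))) •
              sym13 n m (xy13 n m
                (fun p => a p + c (σ⁻¹ p.1, p.2) - (I p : ℕ))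
                (fun p => b p + d (σ⁻¹ p.1, p.2) - (I p : ℕ))))
      = (Polynomial.C ((n.factorial : ℚ))⁻¹ * Polynomial.C ((n.factorial : ℚ))⁻¹) •
          ∑ σ : Equiv.Perm (Fin n), ∑ τ : Equiv.Perm (Fin n),
            ∑ I' ∈ Finset.univ.filter (fun I' : (p : Fin n × Fin m) → Fin (b p + 1) =>
                ∀ p : Fin n × Fin m, (I' p : ℕ) ≤ c ((σ⁻¹ * τ)⁻¹ p.1, p.2)),
              TR a b c d (σ⁻¹ * τ) σ (fun p => (I' p : ℕ)) := by
  simp only [sym13_xy13]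
  simp only [Finset.smul_sum, smul_smul, TR]
  refine Eq.trans (Finset.sum_congr rfl fun σ' _ => Finset.sum_comm) ?_
  rw [Finset.sum_comm]
  refine Finset.sum_congr rfl fun ρ _ => ?_
  refine (Fintype.sum_bijective (fun τ => ρ⁻¹ * τ) (Group.mulLeft_bijective ρ⁻¹) _ _
    (fun τ => Finset.sum_congr rfl fun I _ => by congr 1; ring)).symm

end Aux13

/-- Product rule for the algebra `QSym_{A_n}(m)` of quantum symmetric functions of type
`A_n`:
`s(x^a y^b) ⋆ s(x^c y^d) = (1/n!) Σ_{σ,I} (∏ C(b,I)(σ(c))_I) ℏ^{|I|} s(x^{a+σ(c)-I} y^{b+σ(d)-I})`,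
the inner sum over multi-indices `I ≤ b`, `I ≤ σ(c)` componentwise, with
`σ(c)(i,j) = c(σ⁻¹(i),j)`. -/
theorem statement13 (n m : ℕ) (hn : 1 ≤ n) (hm : 1 ≤ m)
    (a b c d : Fin n × Fin m → ℕ) :
    star13 n m (sym13 n m (xy13 n m a b)) (sym13 n m (xy13 n m c d)) =
      Polynomial.C ((n.factorial : ℚ))⁻¹ •
        ∑ σ : Equiv.Perm (Fin n),
          ∑ I ∈ Finset.univ.filter
              (fun I : (p : Fin n × Fin m) → Fin (b p + 1) =>
                ∀ p : Fin n × Fin m, (I p : ℕ) ≤ c (σ⁻¹ p.1, p.2)),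
            (((∏ p : Fin n × Fin m,
                  (b p).choose (I p) * (c (σ⁻¹ p.1, p.2)).descFactorial (I p) : ℕ) :
                Polynomial ℚ) *
              Polynomial.X ^ (∑ p : Fin n × Fin m, (I p : ℕ))) •
              sym13 n m (xy13 n m
                (fun p => a p + c (σ⁻¹ p.1, p.2) - (I p : ℕ))
                (fun p => b p + d (σ⁻¹ p.1, p.2) - (I p : ℕ))) := by
  have hbD : ∀ p : Fin n × Fin m, b p ≤ ∑ p : Fin n × Fin m, (a p + b p) := fun p =>
    le_trans (Nat.le_add_left _ _)
      (Finset.single_le_sum (f := fun p : Fin n × Fin m => a p + b p)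
        (fun _ _ => Nat.zero_le _) (Finset.mem_univ p))
  rw [Aux13.lhs_expand a b c d, Aux13.rhs_expand a b c d]
  exact congrArg _ (Finset.sum_congr rfl fun σ _ => Finset.sum_congr rfl fun τ _ =>
    Aux13.core a b c d _ hbD σ τ)
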